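/- For any real θ with sin θ ≠ 0 and cos θ ≠ 0, the determinant of A(θ) equals (2 + tan²θ + cot²θ)² = 16 / sin⁴(2θ); in particular det A(θ) ≥ 16 > 0 and A(θ) is invertible. -/

import Mathlib

open Real Matrix

noncomputable def alphaA (θ : ℝ) : Matrix (Fin 4) (Fin 4) ℝ :=
  !![1, -Real.cot θ, -Real.tan θ, 1;
     Real.cot θ, 1, -1, -Real.tan θ;
     Real.tan θ, -1, 1, -Real.cot θ;
     1, Real.tan θ, Real.cot θ, 1]

theorem stmt2 (θ : ℝ) (hs : Real.sin θ ≠ 0) (hc : Real.cos θ ≠ 0) :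
    (alphaA θ).det = (2 + Real.tan θ ^ 2 + Real.cot θ ^ 2) ^ 2 ∧
    (alphaA θ).det = 16 / Real.sin (2 * θ) ^ 4 ∧
    16 ≤ (alphaA θ).det ∧ 0 < (alphaA θ).det ∧ IsUnit (alphaA θ) := by
  have htc : Real.tan θ * Real.cot θ = 1 := by
    rw [Real.tan_eq_sin_div_cos, Real.cot_eq_cos_div_sin]
    field_simp
  have h1 : (alphaA θ).det = (2 + Real.tan θ ^ 2 + Real.cot θ ^ 2) ^ 2 := by
    simp [alphaA, Matrix.det_succ_row_zero, Fin.sum_univ_succ, Fin.succAbove, Fin.castSucc, Fin.castAdd, Fin.castLE]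
    nlinarith [htc, sq_nonneg (Real.tan θ), sq_nonneg (Real.cot θ)]
  have h2 : (alphaA θ).det = 16 / Real.sin (2 * θ) ^ 4 := by
    rw [h1, Real.sin_two_mul, Real.tan_eq_sin_div_cos, Real.cot_eq_cos_div_sin]
    have hp : Real.sin θ ^ 2 + Real.cos θ ^ 2 = 1 := Real.sin_sq_add_cos_sq θ
    field_simp
    set s := Real.sin θ
    set c := Real.cos θ
    linear_combination (16*((s^2+c^2)^3+(s^2+c^2)^2+(s^2+c^2)+1)) * hp
  have hge : (16:ℝ) ≤ (alphaA θ).det := by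
    rw [h1]
    nlinarith [htc, sq_nonneg (Real.tan θ - Real.cot θ), sq_nonneg (Real.tan θ ^ 2 + Real.cot θ ^ 2 - 2)]
  have hpos : (0:ℝ) < (alphaA θ).det := by linarith
  refine ⟨h1, h2, hge, hpos, ?_⟩
  rw [Matrix.isUnit_iff_isUnit_det]
  exact isUnit_iff_ne_zero.mpr (ne_of_gt hpos)
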